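/- Let m ≥ 2 and let t₁, …, t_m be real numbers. For each i ∈ {1, …, m} define the 2×2 matrix G_i = [[−t_i, −1],[1, 0]], and set P_i = G_m · G_{m−1} ⋯ G_{i+1} (with P_m = I₂). Then the matrix ∑_{i=1}^{m} P_i · E · P_iᵀ − I₂ is positive semidefinite, where E = [[0,0],[0,1]]. -/

import Mathlib

open Matrix

lemma E_psd : (!![0, 0; 0, 1] : Matrix (Fin 2) (Fin 2) ℝ).PosSemidef := by
  refine Matrix.PosSemidef.of_dotProduct_mulVec_nonneg ?_ ?_
  · ext i j; fin_cases i <;> fin_cases j <;> simp [Matrix.conjTranspose_apply, Matrix.vecHead, Matrix.vecTail]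
  · intro x
    have : star x ⬝ᵥ ((!![0, 0; 0, 1] : Matrix (Fin 2) (Fin 2) ℝ) *ᵥ x) = x 1 * x 1 := by
      simp [dotProduct, Matrix.mulVec, Fin.sum_univ_two]
    rw [this]
    exact mul_self_nonneg _

lemma sum_psd {s : Finset ℕ} (f : ℕ → Matrix (Fin 2) (Fin 2) ℝ)
    (h : ∀ i ∈ s, (f i).PosSemidef) : (∑ i ∈ s, f i).PosSemidef := by
  classical
  induction s using Finset.induction_on with
  | empty => simpa using Matrix.PosSemidef.zero
  | insert _ _ hni ih =>
    rw [Finset.sum_insert hni]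
    exact (h _ (Finset.mem_insert_self _ _)).add
      (ih fun i hi => h i (Finset.mem_insert_of_mem hi))

theorem chain_noise_psd (m : ℕ) (hm : 2 ≤ m) (t : ℕ → ℝ) :
    let G : ℕ → Matrix (Fin 2) (Fin 2) ℝ := fun i => !![-t i, -1; 1, 0]
    let P : ℕ → Matrix (Fin 2) (Fin 2) ℝ := fun i =>
      (((List.range (m - i)).map (fun j => G (m - j))).prod)
    let E : Matrix (Fin 2) (Fin 2) ℝ := !![0, 0; 0, 1]
    ((∑ i ∈ Finset.Icc 1 m, P i * E * (P i)ᵀ) - 1).PosSemidef := by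
  intro G P E
  obtain ⟨k, rfl⟩ : ∃ k, m = k + 2 := ⟨m - 2, by omega⟩
  have hterm : ∀ i, (P i * E * (P i)ᵀ).PosSemidef := by
    intro i
    have := E_psd.mul_mul_conjTranspose_same (P i)
    rw [Matrix.conjTranspose_eq_transpose_of_trivial] at this
    exact this
  have h1 : ∑ i ∈ Finset.Icc 1 (k + 2), P i * E * (P i)ᵀ
      = (∑ i ∈ Finset.Icc 1 k, P i * E * (P i)ᵀ)
        + (P (k+1) * E * (P (k+1))ᵀ + P (k+2) * E * (P (k+2))ᵀ) := by
    rw [Finset.sum_Icc_succ_top (by omega), Finset.sum_Icc_succ_top (by omega), add_assoc]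
  have hP2 : P (k+2) = 1 := by simp [P]
  have hP1 : P (k+1) = G (k+2) := by
    simp [P, List.range_succ]
  have hzero : P (k+1) * E * (P (k+1))ᵀ + P (k+2) * E * (P (k+2))ᵀ - 1 = 0 := by
    rw [hP1, hP2]
    simp only [G, E]
    ext i j
    fin_cases i <;> fin_cases j <;>
      simp [Matrix.mul_apply, Fin.sum_univ_two, Matrix.one_apply, Matrix.vecHead, Matrix.vecTail, Matrix.vecMul, dotProduct]
  have : (∑ i ∈ Finset.Icc 1 (k + 2), P i * E * (P i)ᵀ) - 1
      = (∑ i ∈ Finset.Icc 1 k, P i * E * (P i)ᵀ) := by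
    rw [h1]
    rw [add_sub_assoc, hzero, add_zero]
  rw [this]
  exact sum_psd _ fun i _ => hterm i
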